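/- Let B be an n×n row-substochastic matrix. Then B is zero-convergent (B^t → 0) if and only if for every index i ∈ {1,…,n} there exists a walk in the underlying digraph of B from vertex i to some vertex j whose row-sum in B is strictly less than 1. -/

import Mathlib

open Filter Matrix

private lemma aux_pow_nonneg {n : ℕ} (B : Matrix (Fin n) (Fin n) ℝ)
    (h0 : ∀ i j, 0 ≤ B i j) : ∀ (t : ℕ) (i j : Fin n), 0 ≤ (B ^ t) i j := by
  intro t
  induction t with
  | zero => intro i j; simp [Matrix.one_apply]; split_ifs <;> norm_num
  | succ t ih =>
    intro i j
    rw [pow_succ', Matrix.mul_apply]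
    exact Finset.sum_nonneg fun m _ => mul_nonneg (h0 i m) (ih m j)

private lemma aux_add {n : ℕ} (B : Matrix (Fin n) (Fin n) ℝ) (s t : ℕ) (i : Fin n) :
    ∑ k, (B ^ (s + t)) i k = ∑ j, (B ^ s) i j * ∑ k, (B ^ t) j k := by
  simp only [pow_add, Matrix.mul_apply]
  rw [Finset.sum_comm]
  simp [Finset.mul_sum]

private lemma aux_zero {n : ℕ} (B : Matrix (Fin n) (Fin n) ℝ) (i : Fin n) :
    ∑ k, (B ^ 0) i k = 1 := by
  simp [Matrix.one_apply]

private lemma aux_one {n : ℕ} (B : Matrix (Fin n) (Fin n) ℝ) (i : Fin n) :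
    ∑ k, (B ^ 1) i k = ∑ k, B i k := by simp

private lemma aux_le_one {n : ℕ} (B : Matrix (Fin n) (Fin n) ℝ)
    (h0 : ∀ i j, 0 ≤ B i j) (h1 : ∀ i, ∑ j, B i j ≤ 1) :
    ∀ (t : ℕ) (i : Fin n), ∑ k, (B ^ t) i k ≤ 1 := by
  intro t
  induction t with
  | zero => intro i; rw [aux_zero]
  | succ t ih =>
    intro i
    have : (t : ℕ) + 1 = 1 + t := by ring
    rw [this, aux_add]
    calc ∑ j, (B ^ 1) i j * ∑ k, (B ^ t) j k
        ≤ ∑ j, (B ^ 1) i j := by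
          apply Finset.sum_le_sum
          intro j _
          exact mul_le_of_le_one_right (aux_pow_nonneg B h0 1 i j) (ih j)
      _ ≤ 1 := by rw [aux_one]; exact h1 i

private lemma aux_anti {n : ℕ} (B : Matrix (Fin n) (Fin n) ℝ)
    (h0 : ∀ i j, 0 ≤ B i j) (h1 : ∀ i, ∑ j, B i j ≤ 1) (i : Fin n) :
    Antitone fun t => ∑ k, (B ^ t) i k := by
  apply antitone_nat_of_succ_le
  intro t
  rw [aux_add B t 1 i]
  calc ∑ j, (B ^ t) i j * ∑ k, (B ^ 1) j k
      ≤ ∑ j, (B ^ t) i j := by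
        apply Finset.sum_le_sum
        intro j _
        apply mul_le_of_le_one_right (aux_pow_nonneg B h0 t i j)
        rw [aux_one]; exact h1 j
    _ = ∑ k, (B ^ t) i k := rfl

theorem stmt3 {n : ℕ} (B : Matrix (Fin n) (Fin n) ℝ)
    (h0 : ∀ i j, 0 ≤ B i j) (h1 : ∀ i, ∑ j, B i j ≤ 1) :
    Tendsto (fun t : ℕ => B ^ t) atTop (nhds 0) ↔
      ∀ i : Fin n, ∃ j : Fin n,
        Relation.ReflTransGen (fun a b => B a b ≠ 0) i j ∧ ∑ k, B j k < 1 := by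
  classical
  constructor
  · -- forward direction
    intro hten
    by_contra hc
    push_neg at hc
    obtain ⟨i, hi⟩ := hc
    set S : Finset (Fin n) :=
      Finset.univ.filter (fun j => Relation.ReflTransGen (fun a b => B a b ≠ 0) i j) with hS
    have hiS : i ∈ S := by
      simp only [hS, Finset.mem_filter]
      exact ⟨Finset.mem_univ _, Relation.ReflTransGen.refl⟩
    have hrow : ∀ j ∈ S, ∑ k, B j k = 1 := by
      intro j hj
      simp only [hS, Finset.mem_filter] at hj
      exact le_antisymm (h1 j) (hi j hj.2)
    have hzero : ∀ j ∈ S, ∀ k, k ∉ S → B j k = 0 := by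
      intro j hj k hk
      by_contra h
      apply hk
      simp only [hS, Finset.mem_filter] at hj ⊢
      exact ⟨Finset.mem_univ _, hj.2.tail h⟩
    have key : ∀ t, ∀ j ∈ S, ∑ k ∈ S, (B ^ t) j k = 1 := by
      intro t
      induction t with
      | zero =>
        intro j hj
        simp [Matrix.one_apply, hj]
      | succ t ih =>
        intro j hj
        have heq : ∑ k ∈ S, (B ^ (t + 1)) j k = ∑ m, B j m * ∑ k ∈ S, (B ^ t) m k := by
          simp only [pow_succ', Matrix.mul_apply]
          rw [Finset.sum_comm]
          simp [Finset.mul_sum]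
        rw [heq]
        have h2 : ∀ m, B j m * ∑ k ∈ S, (B ^ t) m k = B j m := by
          intro m
          by_cases hm : m ∈ S
          · rw [ih m hm, mul_one]
          · rw [hzero j hj m hm, zero_mul]
        rw [Finset.sum_congr rfl fun m _ => h2 m, hrow j hj]
    have hent : ∀ k : Fin n, Tendsto (fun t => (B ^ t) i k) atTop (nhds 0) := by
      intro k
      have hc1 : Continuous fun M : Matrix (Fin n) (Fin n) ℝ => M i k :=
        (continuous_apply k).comp (continuous_apply i)
      have := (hc1.tendsto 0).comp hten
      exact this
    have hsum : Tendsto (fun t => ∑ k ∈ S, (B ^ t) i k) atTop (nhds 0) := by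
      have := tendsto_finset_sum S (fun k (_ : k ∈ S) => hent k)
      simpa using this
    have h1' : Tendsto (fun _ : ℕ => (1 : ℝ)) atTop (nhds 0) :=
      hsum.congr fun t => key t i hiS
    have := tendsto_nhds_unique h1' tendsto_const_nhds
    norm_num at this
  · -- backward direction
    intro hreach
    rcases Nat.eq_zero_or_pos n with hn | hn
    · subst hn
      have hz : ∀ t : ℕ, B ^ t = (0 : Matrix (Fin 0) (Fin 0) ℝ) := by
        intro t; ext i j; exact i.elim0
      simp only [hz]
      exact tendsto_const_nhds
    · haveI hNe : Nonempty (Fin n) := ⟨⟨0, hn⟩⟩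
      have hlt : ∀ i : Fin n, ∃ L, ∑ k, (B ^ L) i k < 1 := by
        intro i
        obtain ⟨j, hij, hjlt⟩ := hreach i
        refine Relation.ReflTransGen.head_induction_on hij ?_ ?_
        · refine ⟨1, ?_⟩
          rw [aux_one]; exact hjlt
        · intro a c hac hcb ih
          obtain ⟨L, hL⟩ := ih
          refine ⟨1 + L, ?_⟩
          rw [aux_add]
          calc ∑ m, (B ^ 1) a m * ∑ k, (B ^ L) m k
              < ∑ m, (B ^ 1) a m := by
                apply Finset.sum_lt_sum
                · intro m _
                  exact mul_le_of_le_one_right (aux_pow_nonneg B h0 1 a m)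
                    (aux_le_one B h0 h1 L m)
                · refine ⟨c, Finset.mem_univ c, ?_⟩
                  have hpos : 0 < (B ^ 1) a c := by
                    simp only [pow_one]
                    exact lt_of_le_of_ne (h0 a c) (Ne.symm hac)
                  exact mul_lt_of_lt_one_right hpos hL
            _ ≤ 1 := by rw [aux_one]; exact h1 a
      choose N hN using hlt
      set T := Finset.univ.sup N with hT
      have hTi : ∀ i, ∑ k, (B ^ T) i k < 1 := fun i =>
        lt_of_le_of_lt (aux_anti B h0 h1 i (Finset.le_sup (Finset.mem_univ i))) (hN i)
      have hT1 : 0 < T := by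
        obtain ⟨i⟩ := hNe
        have hNi : N i ≠ 0 := by
          intro h
          have := hN i
          rw [h, aux_zero] at this
          exact lt_irrefl 1 this
        calc 0 < N i := Nat.pos_of_ne_zero hNi
          _ ≤ T := Finset.le_sup (Finset.mem_univ i)
      set c := Finset.univ.sup' Finset.univ_nonempty (fun i => ∑ k, (B ^ T) i k) with hcdef
      have hfc : ∀ i, ∑ k, (B ^ T) i k ≤ c := by
        intro i
        rw [hcdef]
        exact Finset.le_sup' (fun i => ∑ k, (B ^ T) i k) (Finset.mem_univ i)
      have hc1 : c < 1 := by
        rw [hcdef, Finset.sup'_lt_iff]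
        intro i _
        exact hTi i
      have hc0 : 0 ≤ c := by
        obtain ⟨i⟩ := hNe
        exact le_trans (Finset.sum_nonneg fun k _ => aux_pow_nonneg B h0 T i k) (hfc i)
      have hsub : ∀ s i, ∑ k, (B ^ (s + T)) i k ≤ c * ∑ k, (B ^ s) i k := by
        intro s i
        rw [aux_add]
        calc ∑ j, (B ^ s) i j * ∑ k, (B ^ T) j k
            ≤ ∑ j, (B ^ s) i j * c :=
              Finset.sum_le_sum fun j _ =>
                mul_le_mul_of_nonneg_left (hfc j) (aux_pow_nonneg B h0 s i j)
          _ = c * ∑ j, (B ^ s) i j := by rw [← Finset.sum_mul, mul_comm]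
      have hpowc : ∀ m (i : Fin n), ∑ k, (B ^ (m * T)) i k ≤ c ^ m := by
        intro m
        induction m with
        | zero => intro i; rw [Nat.zero_mul, aux_zero, pow_zero]
        | succ m ih =>
          intro i
          have hmt : (m + 1) * T = m * T + T := by ring
          rw [hmt]
          calc ∑ k, (B ^ (m * T + T)) i k ≤ c * ∑ k, (B ^ (m * T)) i k := hsub _ i
            _ ≤ c * c ^ m := mul_le_mul_of_nonneg_left (ih i) hc0
            _ = c ^ (m + 1) := by ring
      have hbound : ∀ (t : ℕ) (i : Fin n), ∑ k, (B ^ t) i k ≤ c ^ (t / T) := by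
        intro t i
        calc ∑ k, (B ^ t) i k ≤ ∑ k, (B ^ (t / T * T)) i k :=
              aux_anti B h0 h1 i (Nat.div_mul_le_self t T)
          _ ≤ c ^ (t / T) := hpowc _ i
      have hdiv : Tendsto (fun t : ℕ => t / T) atTop atTop := by
        apply tendsto_atTop_atTop.mpr
        intro b
        exact ⟨b * T, fun a ha => (Nat.le_div_iff_mul_le hT1).mpr ha⟩
      have hcpow : Tendsto (fun t : ℕ => c ^ (t / T)) atTop (nhds 0) :=
        (tendsto_pow_atTop_nhds_zero_of_lt_one hc0 hc1).comp hdiv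
      refine tendsto_pi_nhds.mpr ?_
      intro i
      rw [tendsto_pi_nhds]
      intro j
      have hub : ∀ t, (B ^ t) i j ≤ ∑ k, (B ^ t) i k := fun t =>
        Finset.single_le_sum (fun k _ => aux_pow_nonneg B h0 t i k) (Finset.mem_univ j)
      have hfin := tendsto_of_tendsto_of_tendsto_of_le_of_le
        (tendsto_const_nhds (x := (0 : ℝ))) hcpow
        (fun t => aux_pow_nonneg B h0 t i j)
        (fun t => le_trans (hub t) (hbound t i))
      simpa using hfin
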